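/- Let Γ ≤ Aff(n) be a subgroup whose translation lattice Λ_Γ is a full lattice in ℝⁿ and whose holonomy F_Γ is finite. Write N = N_{Aff(n)}(Γ) for the normalizer and C = C_{Aff(n)}(Γ) for the centralizer of Γ in Aff(n). Then the subgroup Γ·C of N (which is a subgroup since C centralizes Γ and C ⊆ N) has finite index in N ∩ τ⁻¹(F_Γ). -/

import Mathlib

/-- `Aff n` is the group of invertible affine transformations of `ℝⁿ`. -/
abbrev Aff (n : ℕ) := (Fin n → ℝ) ≃ᵃ[ℝ] (Fin n → ℝ)

/-- `τ : Aff(n) → GL(n,ℝ)`, sending an affine transformation to its linear part. -/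
noncomputable def tau (n : ℕ) : Aff n →* ((Fin n → ℝ) ≃ₗ[ℝ] (Fin n → ℝ)) :=
  AffineEquiv.linearHom

/-- The translation lattice `Λ_Γ` of a subgroup `Γ ≤ Aff(n)`. -/
def transLattice (n : ℕ) (Γ : Subgroup (Aff n)) : Set (Fin n → ℝ) :=
  {v | AffineEquiv.constVAdd ℝ (Fin n → ℝ) v ∈ Γ}

namespace Stmt4Aux
variable {n : ℕ}

noncomputable def T (v : Fin n → ℝ) : Aff n := AffineEquiv.constVAdd ℝ (Fin n → ℝ) v

lemma T_add (v w : Fin n → ℝ) : T (v + w) = T v * T w := by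
  ext x; simp [T, AffineEquiv.constVAdd_apply, add_assoc]

lemma T_zero : (T 0 : Aff n) = 1 := by ext x; simp [T]

lemma T_neg (v : Fin n → ℝ) : T (-v) = (T v)⁻¹ := by
  rw [eq_inv_iff_mul_eq_one, ← T_add, neg_add_cancel, T_zero]

lemma T_conj (g : Aff n) (v : Fin n → ℝ) : g * T v * g⁻¹ = T (tau n g v) := by
  apply AffineEquiv.ext; intro x
  show g (T v (g⁻¹ x)) = _
  simp only [T, tau, AffineEquiv.constVAdd_apply, AffineEquiv.linearHom_apply]
  rw [show (v +ᵥ g⁻¹ x) = v +ᵥ (g⁻¹ x) from rfl, AffineEquiv.map_vadd]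
  simp [show g⁻¹ = g.symm from rfl]

lemma T_of_tau_eq_one (h : Aff n) (hh : tau n h = 1) : h = T (h 0) := by
  apply AffineEquiv.ext; intro x
  show h x = h 0 +ᵥ x
  have : h x = h (x +ᵥ (0 : Fin n → ℝ)) := by norm_num
  rw [this, AffineEquiv.map_vadd]
  have hl : h.linear x = x := by
    have : h.linear = (1 : (Fin n → ℝ) ≃ₗ[ℝ] (Fin n → ℝ)) := hh
    rw [this]; rfl
  rw [hl]
  show x + h 0 = h 0 + x
  exact add_comm _ _

/-- The translation lattice as an `AddSubgroup`. -/
def LatA (Γ : Subgroup (Aff n)) : AddSubgroup (Fin n → ℝ) where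
  carrier := transLattice n Γ
  add_mem' := by intro a b ha hb; show T (a + b) ∈ Γ; rw [T_add]; exact mul_mem ha hb
  zero_mem' := by show T (0:Fin n → ℝ) ∈ Γ; rw [T_zero]; exact one_mem Γ
  neg_mem' := by intro a ha; show T (-a) ∈ Γ; rw [T_neg]; exact inv_mem ha

/-- The translation lattice as a `ℤ`-submodule. -/
def Lat (Γ : Subgroup (Aff n)) : Submodule ℤ (Fin n → ℝ) := (LatA Γ).toIntSubmodule

lemma mem_Lat {Γ : Subgroup (Aff n)} {v : Fin n → ℝ} : v ∈ Lat Γ ↔ T v ∈ Γ := Iff.rfl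


lemma discrete_Lat (Γ : Subgroup (Aff n)) (hdisc : DiscreteTopology ↥(transLattice n Γ)) :
    DiscreteTopology ↥(Lat Γ) := hdisc

lemma finite_Lat (Γ : Subgroup (Aff n)) (hdisc : DiscreteTopology ↥(transLattice n Γ)) :
    Module.Finite ℤ ↥(Lat Γ) := by
  haveI := discrete_Lat Γ hdisc
  exact instModuleFinite_of_discrete_submodule (Lat Γ)


/-- The map `x ↦ (1/m) x mod L` from `L` to `V/L`. -/
noncomputable def psi (L : Submodule ℤ (Fin n → ℝ)) (m : ℕ) :
    ↥L →+ ((Fin n → ℝ) ⧸ L) where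
  toFun x := Submodule.Quotient.mk ((m : ℝ)⁻¹ • (x : Fin n → ℝ))
  map_zero' := by simp
  map_add' := by intro x y; simp [smul_add, ← Submodule.Quotient.mk_add]

lemma psi_range_finite (L : Submodule ℤ (Fin n → ℝ)) (m : ℕ) (hm : m ≠ 0)
    (hfg : Module.Finite ℤ ↥L) : Finite ↥(psi L m).range := by
  haveI : AddGroup.FG ↥L := Module.Finite.iff_addGroup_fg.mp hfg
  haveI : AddGroup.FG ↥(psi L m).range :=
    AddGroup.fg_of_surjective ((psi L m).rangeRestrict_surjective)
  apply AddCommGroup.finite_of_fg_torsion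
  intro x
  rw [isOfFinAddOrder_iff_nsmul_eq_zero]
  refine ⟨m, Nat.pos_of_ne_zero hm, ?_⟩
  obtain ⟨v, hv⟩ := x
  obtain ⟨y, rfl⟩ := hv
  apply Subtype.ext
  show m • (psi L m y) = 0
  rw [← map_nsmul]
  show Submodule.Quotient.mk ((m:ℝ)⁻¹ • ((m • y : ↥L) : Fin n → ℝ)) = 0
  have : ((m • y : ↥L) : Fin n → ℝ) = (m : ℝ) • (y : Fin n → ℝ) := by
    rw [Nat.cast_smul_eq_nsmul ℝ]
    rfl
  rw [this, inv_smul_smul₀ (by exact_mod_cast hm)]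
  rw [Submodule.Quotient.mk_eq_zero]
  exact y.2


variable (F : Subgroup ((Fin n → ℝ) ≃ₗ[ℝ] (Fin n → ℝ))) [Fintype ↥F]

/-- Average of the orbit of `c` under the finite group `F`. -/
noncomputable def favg (c : Fin n → ℝ) : Fin n → ℝ :=
  (Nat.card ↥F : ℝ)⁻¹ • ∑ B : ↥F, (B : (Fin n → ℝ) ≃ₗ[ℝ] (Fin n → ℝ)) c

noncomputable def wfun (c : Fin n → ℝ) : Fin n → ℝ := c - favg F c

lemma favg_fixed {A : (Fin n → ℝ) ≃ₗ[ℝ] (Fin n → ℝ)} (hA : A ∈ F) (c : Fin n → ℝ) :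
    A (favg F c) = favg F c := by
  unfold favg
  rw [map_smul, map_sum]
  congr 1
  exact Fintype.sum_equiv (Equiv.mulLeft (⟨A, hA⟩ : ↥F))
    (fun B => A ((B : (Fin n → ℝ) ≃ₗ[ℝ] (Fin n → ℝ)) c))
    (fun B => (B : (Fin n → ℝ) ≃ₗ[ℝ] (Fin n → ℝ)) c) (fun B => rfl)

lemma favg_key (hc : Nat.card ↥F ≠ 0) (c : Fin n → ℝ) :
    (Nat.card ↥F : ℝ)⁻¹ • ∑ B : ↥F, (c - (B : (Fin n → ℝ) ≃ₗ[ℝ] (Fin n → ℝ)) c)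
      = wfun F c := by
  rw [Finset.sum_sub_distrib, Finset.sum_const, Finset.card_univ, smul_sub,
    ← Nat.cast_smul_eq_nsmul ℝ, ← Nat.card_eq_fintype_card,
    inv_smul_smul₀ (by exact_mod_cast hc)]
  rfl


end Stmt4Aux


open Stmt4Aux

/-- Let `Γ ≤ Aff(n)` have full translation lattice `Λ_Γ` (a discrete
additive subgroup spanning `ℝⁿ`) and finite holonomy `F_Γ = τ(Γ)`.  Then the subgroup
`Γ·C` generated by `Γ` and the centralizer `C = C_{Aff(n)}(Γ)` has finite index in
`N ∩ τ⁻¹(F_Γ)`, where `N = N_{Aff(n)}(Γ)`. -/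
theorem stmt4 (n : ℕ) (Γ : Subgroup (Aff n))
    (hdisc : DiscreteTopology ↥(transLattice n Γ))
    (hspan : Submodule.span ℝ (transLattice n Γ) = ⊤)
    (hfin : Finite ↥(Γ.map (tau n))) :
    (Γ ⊔ Subgroup.centralizer (Γ : Set (Aff n))).relIndex
      (Subgroup.normalizer (Γ : Set (Aff n)) ⊓ (Γ.map (tau n)).comap (tau n)) ≠ 0 := by
  classical
  haveI : Fintype ↥(Γ.map (tau n)) := Fintype.ofFinite _
  set F := Γ.map (tau n) with hF
  set m := Nat.card ↥F with hmdef
  have hm : m ≠ 0 := Nat.card_pos.ne'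
  have hfg : Module.Finite ℤ ↥(Lat Γ) := finite_Lat Γ hdisc
  haveI hQfin : Finite ↥(psi (Lat Γ) m).range := psi_range_finite _ m hm hfg
  set K := Subgroup.normalizer (Γ : Set (Aff n)) ⊓ F.comap (tau n) with hK
  set H := Γ ⊔ Subgroup.centralizer (Γ : Set (Aff n)) with hH
  -- `T f` for `F`-fixed `f` lies in the centralizer
  have hcent : ∀ f : Fin n → ℝ, (∀ A ∈ F, A f = f) →
      T f ∈ Subgroup.centralizer (Γ : Set (Aff n)) := by
    intro f hf
    rw [Subgroup.mem_centralizer_iff]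
    intro g hg
    have h1 : g * T f * g⁻¹ = T f := by
      rw [T_conj]
      congr 1
      exact hf _ (Subgroup.mem_map_of_mem _ hg) 
    calc g * T f = g * T f * g⁻¹ * g := by group
      _ = T f * g := by rw [h1]
  -- a translation normalizing `Γ` has `c - A c ∈ Λ` for all `A ∈ F`
  have hsub : ∀ c : Fin n → ℝ, T c ∈ Subgroup.normalizer (Γ : Set (Aff n)) → ∀ A ∈ F, c - A c ∈ Lat Γ := by
    intro c hc A hA
    obtain ⟨δ, hδ, hδτ⟩ := Subgroup.mem_map.mp hA
    have h1 : T c * δ * (T c)⁻¹ ∈ Γ := (Subgroup.mem_normalizer_iff.mp hc δ).mp hδ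
    have h2 : T c * δ * (T c)⁻¹ * δ⁻¹ ∈ Γ := mul_mem h1 (inv_mem hδ)
    have h3 : T c * δ * (T c)⁻¹ * δ⁻¹ = T (c - A c) := by
      rw [show (T c)⁻¹ = T (-c) from (T_neg c).symm]
      calc T c * δ * T (-c) * δ⁻¹ = T c * (δ * T (-c) * δ⁻¹) := by group
        _ = T c * T (tau n δ (-c)) := by rw [T_conj]
        _ = T (c + tau n δ (-c)) := (T_add _ _).symm
        _ = T (c - A c) := by rw [hδτ, map_neg, ← sub_eq_add_neg]
    show T (c - A c) ∈ Γ
    rw [← h3]; exact h2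
  -- decomposition of elements of `K`
  have hdecomp : ∀ g : Aff n, g ∈ K → ∃ c γ, γ ∈ Γ ∧ tau n γ = tau n g ∧ g = T c * γ := by
    intro g hg
    obtain ⟨hg1, hg2⟩ := Subgroup.mem_inf.mp hg
    obtain ⟨γ, hγ, hγτ⟩ := Subgroup.mem_map.mp (Subgroup.mem_comap.mp hg2)
    refine ⟨(g * γ⁻¹) 0, γ, hγ, hγτ, ?_⟩
    have ht : tau n (g * γ⁻¹) = 1 := by
      rw [map_mul, map_inv, hγτ, mul_inv_cancel]
    have := T_of_tau_eq_one (g * γ⁻¹) ht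
    rw [← this, inv_mul_cancel_right]
  -- the class of `wfun F c` lies in the range of `psi`
  have hw_mk : ∀ c : Fin n → ℝ, T c ∈ Subgroup.normalizer (Γ : Set (Aff n)) →
      ∃ q : ↥(psi (Lat Γ) m).range,
        (q : (Fin n → ℝ) ⧸ (Lat Γ)) = Submodule.Quotient.mk (wfun F c) := by
    intro c hc
    have hy : ∑ B : ↥F, (c - (B : (Fin n → ℝ) ≃ₗ[ℝ] (Fin n → ℝ)) c) ∈ Lat Γ :=
      Submodule.sum_mem _ (fun B _ => hsub c hc B B.2)
    refine ⟨⟨psi (Lat Γ) m ⟨_, hy⟩, AddMonoidHom.mem_range.mpr ⟨_, rfl⟩⟩, ?_⟩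
    show Submodule.Quotient.mk ((m : ℝ)⁻¹ • _) = _
    rw [favg_key F hm c]
  -- the relation
  set R : ↥K → (↥F × ↥(psi (Lat Γ) m).range) → Prop := fun g p =>
    ∃ c γ, γ ∈ Γ ∧ tau n γ = (p.1 : (Fin n → ℝ) ≃ₗ[ℝ] (Fin n → ℝ)) ∧
      (g : Aff n) = T c * γ ∧
      Submodule.Quotient.mk (wfun F c) = (p.2 : (Fin n → ℝ) ⧸ (Lat Γ)) with hR
  have hex : ∀ g : ↥K, ∃ p, R g p := by
    intro g
    obtain ⟨c, γ, hγ, hγτ, he⟩ := hdecomp g g.2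
    have hTc : T c ∈ Subgroup.normalizer (Γ : Set (Aff n)) := by
      have : T c = (g : Aff n) * γ⁻¹ := by rw [he, mul_inv_cancel_right]
      rw [this]
      exact mul_mem (Subgroup.mem_inf.mp g.2).1 (inv_mem (Subgroup.le_normalizer hγ))
    obtain ⟨q, hq⟩ := hw_mk c hTc
    exact ⟨(⟨tau n γ, Subgroup.mem_map_of_mem (tau n) hγ⟩, q), c, γ, hγ, rfl, he, hq.symm⟩
  have hkey : ∀ (g₁ g₂ : ↥K) p, R g₁ p → R g₂ p → g₁⁻¹ * g₂ ∈ H.subgroupOf K := by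
    rintro g₁ g₂ p ⟨c₁, γ₁, hγ₁, hτ₁, he₁, hq₁⟩ ⟨c₂, γ₂, hγ₂, hτ₂, he₂, hq₂⟩
    rw [Subgroup.mem_subgroupOf]
    have hTT : T (-c₁) * T c₂ = T (c₂ - c₁) := by
      rw [← T_add]; congr 1; abel
    have hv : ((g₁⁻¹ * g₂ : ↥K) : Aff n) = γ₁⁻¹ * T (c₂ - c₁) * γ₂ := by
      push_cast
      rw [he₁, he₂, mul_inv_rev, ← T_neg]
      calc γ₁⁻¹ * T (-c₁) * (T c₂ * γ₂) = γ₁⁻¹ * (T (-c₁) * T c₂) * γ₂ := by group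
        _ = γ₁⁻¹ * T (c₂ - c₁) * γ₂ := by rw [hTT]
    rw [hv]
    have hfm : T (favg F c₂ - favg F c₁) ∈ H := by
      apply Subgroup.mem_sup_right
      apply hcent
      intro A hA
      rw [map_sub, favg_fixed F hA, favg_fixed F hA]
    have hwm : T (wfun F c₂ - wfun F c₁) ∈ H := by
      apply Subgroup.mem_sup_left
      have : wfun F c₂ - wfun F c₁ ∈ Lat Γ :=
        (Submodule.Quotient.eq (Lat Γ)).mp (hq₂.trans hq₁.symm)
      exact this
    have hTm : T (c₂ - c₁) ∈ H := by
      have hsplit : c₂ - c₁ = (favg F c₂ - favg F c₁) + (wfun F c₂ - wfun F c₁) := by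
        unfold wfun; abel
      rw [hsplit, T_add]
      exact mul_mem hfm hwm
    exact mul_mem (mul_mem (inv_mem (Subgroup.mem_sup_left hγ₁)) hTm)
      (Subgroup.mem_sup_left hγ₂)
  -- the quotient is finite
  haveI : Finite (↥K ⧸ H.subgroupOf K) := by
    apply Finite.of_surjective
      (fun p : ↥F × ↥(psi (Lat Γ) m).range =>
        if h : ∃ g : ↥K, R g p then (QuotientGroup.mk h.choose : ↥K ⧸ H.subgroupOf K)
        else (QuotientGroup.mk 1))
    intro x
    obtain ⟨g, rfl⟩ := QuotientGroup.mk_surjective x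
    obtain ⟨p, hp⟩ := hex g
    refine ⟨p, ?_⟩
    have hpe : ∃ g, R g p := ⟨g, hp⟩
    simp only [dif_pos hpe]
    exact QuotientGroup.eq.mpr (hkey _ _ p hpe.choose_spec hp)
  exact Subgroup.index_ne_zero_of_finite
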